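/- For all integers s, t ≥ 2 and every natural number n, the number of partitions of n that are s-regular and t-distinct equals the number of partitions of n that are t-regular and s-distinct. -/

import Mathlib

/-- A partition is `m`-regular if no part is divisible by `m`. -/
def Nat.Partition.IsRegular {n : ℕ} (m : ℕ) (P : n.Partition) : Prop :=
  ∀ a ∈ P.parts, ¬ m ∣ a

/-- A partition is `m`-distinct if every part appears fewer than `m` times. -/
def Nat.Partition.IsDistinct {n : ℕ} (m : ℕ) (P : n.Partition) : Prop :=
  ∀ a, P.parts.count a < m

/-- A partition is `m`-flat if consecutive parts differ by less than `m` and the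
smallest part is less than `m`; equivalently, every part is either less than `m`
or within less than `m` of some strictly smaller part. -/
def Nat.Partition.IsFlat {n : ℕ} (m : ℕ) (P : n.Partition) : Prop :=
  ∀ a ∈ P.parts, a < m ∨ ∃ b ∈ P.parts, b < a ∧ a - b < m

namespace RegDistAux

noncomputable section

open PowerSeries Finset

open scoped Classical

/-- A convenience constructor for the power series whose coefficients indicate a subset. -/
def indicatorSeries (α : Type*) [Semiring α] (s : Set ℕ) : PowerSeries α :=
  PowerSeries.mk fun n => if n ∈ s then 1 else 0

variable {α : Type*}

theorem coeff_indicator (s : Set ℕ) [Semiring α] (n : ℕ) :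
    coeff (R := α) n (indicatorSeries _ s) = if n ∈ s then 1 else 0 :=
  coeff_mk _ _

open Finset.HasAntidiagonal

theorem partialGF_prop (α : Type*) [CommSemiring α] (n : ℕ) (s : Finset ℕ) (hs : ∀ i ∈ s, 0 < i)
    (c : ℕ → Set ℕ) (hc : ∀ i, i ∉ s → 0 ∈ c i) :
    #{p : n.Partition | (∀ j, p.parts.count j ∈ c j) ∧ ∀ j ∈ p.parts, j ∈ s} =
      coeff (R := α) n (∏ i ∈ s, indicatorSeries α ((· * i) '' c i)) := by
  simp_rw [coeff_prod, coeff_indicator, prod_boole, sum_boole]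
  apply congr_arg
  simp only [mem_univ, forall_true_left, not_and, not_forall, exists_prop,
    Set.mem_image, not_exists]
  set φ : (a : Nat.Partition n) →
    a ∈ filter (fun p ↦ (∀ (j : ℕ), Multiset.count j p.parts ∈ c j) ∧ ∀ j ∈ p.parts, j ∈ s) univ →
    ℕ →₀ ℕ := fun p _ => {
      toFun := fun i => Multiset.count i p.parts • i
      support := Finset.filter (fun i => i ≠ 0) p.parts.toFinset
      mem_support_toFun := fun a => by
        simp only [smul_eq_mul, ne_eq, mul_eq_zero, Multiset.count_eq_zero]
        rw [not_or, not_not]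
        simp only [Multiset.mem_toFinset, not_not, mem_filter] }
  refine Finset.card_bij φ ?_ ?_ ?_
  · intro a ha
    simp only [φ, not_forall, not_exists, not_and, exists_prop, mem_filter]
    rw [mem_finsuppAntidiag]
    dsimp only [ne_eq, smul_eq_mul, id_eq, eq_mpr_eq_cast, le_eq_subset, Finsupp.coe_mk]
    simp only [mem_univ, forall_true_left, not_and, not_forall, exists_prop,
      mem_filter, true_and] at ha
    refine ⟨⟨?_, fun i ↦ ?_⟩, fun i _ ↦ ⟨a.parts.count i, ha.1 i, rfl⟩⟩
    · conv_rhs => simp [← a.parts_sum]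
      rw [sum_multiset_count_of_subset _ s]
      · simp only [smul_eq_mul]
      · intro i
        simp only [Multiset.mem_toFinset, not_not, mem_filter]
        apply ha.2
    · simp only [ne_eq, Multiset.mem_toFinset, not_not, mem_filter, and_imp]
      exact fun hi _ ↦ ha.2 i hi
  · intro p₁ hp₁ p₂ hp₂ h
    apply Nat.Partition.ext
    simp only [true_and, mem_univ, mem_filter] at hp₁ hp₂
    ext i
    simp only [φ, ne_eq, Multiset.mem_toFinset, not_not, smul_eq_mul, Finsupp.mk.injEq] at h
    by_cases hi : i = 0
    · rw [hi]
      rw [Multiset.count_eq_zero_of_notMem]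
      · rw [Multiset.count_eq_zero_of_notMem]
        intro a; exact Nat.lt_irrefl 0 (hs 0 (hp₂.2 0 a))
      intro a; exact Nat.lt_irrefl 0 (hs 0 (hp₁.2 0 a))
    · rw [← mul_left_inj' hi]
      rw [funext_iff] at h
      exact h.2 i
  · simp only [φ, mem_filter, mem_finsuppAntidiag, mem_univ, exists_prop, true_and, and_assoc]
    rintro f ⟨hf, hf₃, hf₄⟩
    have hf' : f ∈ finsuppAntidiag s n := mem_finsuppAntidiag.mpr ⟨hf, hf₃⟩
    simp only [mem_finsuppAntidiag] at hf'
    refine ⟨⟨∑ i ∈ s, Multiset.replicate (f i / i) i, ?_, ?_⟩, ?_, ?_, ?_⟩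
    · intro i hi
      simp only [exists_prop, Multiset.mem_sum, mem_map, Function.Embedding.coeFn_mk] at hi
      rcases hi with ⟨t, ht, z⟩
      apply hs
      rwa [Multiset.eq_of_mem_replicate z]
    · simp_rw [Multiset.sum_sum, Multiset.sum_replicate, Nat.nsmul_eq_mul]
      rw [← hf'.1]
      refine sum_congr rfl fun i hi => Nat.div_mul_cancel ?_
      rcases hf₄ i hi with ⟨w, _, hw₂⟩
      rw [← hw₂]
      exact dvd_mul_left _ _
    · intro i
      simp_rw [Multiset.count_sum', Multiset.count_replicate, sum_ite_eq']
      split_ifs with h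
      · rcases hf₄ i h with ⟨w, hw₁, hw₂⟩
        rwa [← hw₂, Nat.mul_div_cancel _ (hs i h)]
      · exact hc _ h
    · intro i hi
      rw [Multiset.mem_sum] at hi
      rcases hi with ⟨j, hj₁, hj₂⟩
      rwa [Multiset.eq_of_mem_replicate hj₂]
    · ext i
      simp_rw [Multiset.count_sum', Multiset.count_replicate, sum_ite_eq']
      simp only [ne_eq, Multiset.mem_toFinset, not_not, smul_eq_mul, ite_mul,
        zero_mul, Finsupp.coe_mk]
      split_ifs with h
      · apply Nat.div_mul_cancel
        rcases hf₄ i h with ⟨w, _, hw₂⟩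
        apply Dvd.intro_left _ hw₂
      · apply symm
        rw [← Finsupp.notMem_support_iff]
        exact notMem_mono hf'.2 h

theorem sum_pow_mul_eq_indicator (i t : ℕ) (hi : 0 < i) :
    (∑ j ∈ range t, (X : PowerSeries ℚ) ^ (j * i)) =
      indicatorSeries ℚ ((· * i) '' {j | j < t}) := by
  ext k
  simp only [map_sum, coeff_X_pow, coeff_indicator]
  by_cases h : k ∈ (· * i) '' {j | j < t}
  · rw [if_pos h]
    obtain ⟨j, hj, rfl⟩ := h
    rw [Finset.sum_eq_single j]
    · rw [if_pos rfl]
    · intro b _ hbj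
      rw [if_neg]
      exact fun e => hbj (Nat.eq_of_mul_eq_mul_right hi e.symm)
    · intro hj'
      exact absurd (mem_range.mpr hj) hj'
  · rw [if_neg h, Finset.sum_eq_zero]
    intro j hj
    rw [if_neg]
    exact fun e => h ⟨j, mem_range.mp hj, e.symm⟩

theorem sum_pow_geom (i t : ℕ) :
    (∑ j ∈ range t, (X : PowerSeries ℚ) ^ (j * i)) * (1 - X ^ i) = 1 - X ^ (t * i) := by
  have h := geom_sum_mul ((X : PowerSeries ℚ) ^ i) t
  have hp : ∀ j : ℕ, ((X : PowerSeries ℚ) ^ i) ^ j = X ^ (j * i) := by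
    intro j; rw [← pow_mul, mul_comm]
  simp_rw [hp] at h
  linear_combination -h

theorem dvd_prod_sub_one (n : ℕ) (u : Finset ℕ) (e : ℕ → ℕ) (he : ∀ j ∈ u, n < e j) :
    (X : PowerSeries ℚ) ^ (n + 1) ∣ (∏ j ∈ u, (1 - (X : PowerSeries ℚ) ^ e j)) - 1 := by
  classical
  induction u using Finset.induction_on with
  | empty => simp
  | @insert a u ha ih =>
    rw [Finset.prod_insert ha]
    have h1 := ih fun j hj => he j (mem_insert_of_mem hj)
    have h2 : (X : PowerSeries ℚ) ^ (n + 1) ∣ X ^ e a :=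
      pow_dvd_pow _ (he a (mem_insert_self a u))
    have key : (1 - (X : PowerSeries ℚ) ^ e a) * ∏ j ∈ u, (1 - (X : PowerSeries ℚ) ^ e j) - 1 =
        ((∏ j ∈ u, (1 - (X : PowerSeries ℚ) ^ e j)) - 1) -
          X ^ e a * ∏ j ∈ u, (1 - (X : PowerSeries ℚ) ^ e j) := by ring
    rw [key]
    exact dvd_sub h1 (h2.mul_right _)

theorem filter_dvd_eq_image (s n : ℕ) (hs : 0 < s) :
    (Ioc 0 n).filter (fun i => s ∣ i) = (Ioc 0 (n / s)).image (fun j => s * j) := by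
  ext i
  simp only [mem_filter, mem_Ioc, mem_image]
  constructor
  · rintro ⟨⟨hi0, hin⟩, j, rfl⟩
    refine ⟨j, ⟨Nat.pos_of_ne_zero fun h => by subst h; simp at hi0,
      by rw [Nat.le_div_iff_mul_le hs, mul_comm]; omega⟩, rfl⟩
  · rintro ⟨j, ⟨hj0, hjn⟩, rfl⟩
    rw [Nat.le_div_iff_mul_le hs] at hjn
    rw [mul_comm] at hjn
    exact ⟨⟨by positivity, by omega⟩, ⟨j, rfl⟩⟩

theorem prod_filter_dvd (s n : ℕ) (hs : 0 < s) (f : ℕ → PowerSeries ℚ) :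
    ∏ i ∈ (Ioc 0 n).filter (fun i => s ∣ i), f i = ∏ j ∈ Ioc 0 (n / s), f (s * j) := by
  rw [filter_dvd_eq_image s n hs, Finset.prod_image]
  intro a _ b _ h
  exact Nat.eq_of_mul_eq_mul_left hs h

/-- The partial generating function for `s`-regular, `t`-distinct partitions. -/
def F (s t n : ℕ) : PowerSeries ℚ :=
  ∏ i ∈ (Ioc 0 n).filter (fun i => ¬ s ∣ i), ∑ j ∈ range t, (X : PowerSeries ℚ) ^ (j * i)

theorem key_dvd (s t n : ℕ) (hs : 2 ≤ s) (ht : 2 ≤ t) :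
    (X : PowerSeries ℚ) ^ (n + 1) ∣
      F s t n * ((∏ i ∈ Ioc 0 n, (1 - (X : PowerSeries ℚ) ^ i)) *
          ∏ j ∈ Ioc 0 n, (1 - (X : PowerSeries ℚ) ^ (s * t * j))) -
        (∏ j ∈ Ioc 0 n, (1 - (X : PowerSeries ℚ) ^ (t * j))) *
          ∏ j ∈ Ioc 0 n, (1 - (X : PowerSeries ℚ) ^ (s * j)) := by
  have hs0 : 0 < s := by omega
  -- E1 : F * ∏_{¬dvd} (1 - X^i) = ∏_{¬dvd} (1 - X^(t*i))
  have E1 : F s t n * ∏ i ∈ (Ioc 0 n).filter (fun i => ¬ s ∣ i), (1 - (X : PowerSeries ℚ) ^ i) =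
      ∏ i ∈ (Ioc 0 n).filter (fun i => ¬ s ∣ i), (1 - (X : PowerSeries ℚ) ^ (t * i)) := by
    rw [F, ← Finset.prod_mul_distrib]
    exact Finset.prod_congr rfl fun i _ => sum_pow_geom i t
  have hsplit : ∀ g : ℕ → PowerSeries ℚ,
      (∏ i ∈ (Ioc 0 n).filter (fun i => s ∣ i), g i) *
        ∏ i ∈ (Ioc 0 n).filter (fun i => ¬ s ∣ i), g i = ∏ i ∈ Ioc 0 n, g i := fun g =>
    Finset.prod_filter_mul_prod_filter_not _ _ _
  -- E2
  have E2 : F s t n * (∏ i ∈ Ioc 0 n, (1 - (X : PowerSeries ℚ) ^ i)) *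
      ∏ j ∈ Ioc 0 (n / s), (1 - (X : PowerSeries ℚ) ^ (s * t * j)) =
      (∏ j ∈ Ioc 0 n, (1 - (X : PowerSeries ℚ) ^ (t * j))) *
        ∏ j ∈ Ioc 0 (n / s), (1 - (X : PowerSeries ℚ) ^ (s * j)) := by
    rw [← hsplit (fun i => 1 - (X : PowerSeries ℚ) ^ i),
      ← hsplit (fun i => 1 - (X : PowerSeries ℚ) ^ (t * i))]
    rw [prod_filter_dvd s n hs0 (fun i => 1 - (X : PowerSeries ℚ) ^ i),
      prod_filter_dvd s n hs0 (fun i => 1 - (X : PowerSeries ℚ) ^ (t * i))]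
    have : ∀ j : ℕ, (1 - (X : PowerSeries ℚ) ^ (t * (s * j))) =
        1 - (X : PowerSeries ℚ) ^ (s * t * j) := by
      intro j; rw [show t * (s * j) = s * t * j by ring]
    simp_rw [this]
    calc F s t n * ((∏ j ∈ Ioc 0 (n / s), (1 - (X : PowerSeries ℚ) ^ (s * j))) *
          ∏ i ∈ (Ioc 0 n).filter (fun i => ¬ s ∣ i), (1 - (X : PowerSeries ℚ) ^ i)) *
          ∏ j ∈ Ioc 0 (n / s), (1 - (X : PowerSeries ℚ) ^ (s * t * j))
        = (F s t n * ∏ i ∈ (Ioc 0 n).filter (fun i => ¬ s ∣ i), (1 - (X : PowerSeries ℚ) ^ i)) *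
          ((∏ j ∈ Ioc 0 (n / s), (1 - (X : PowerSeries ℚ) ^ (s * j))) *
          ∏ j ∈ Ioc 0 (n / s), (1 - (X : PowerSeries ℚ) ^ (s * t * j))) := by ring
      _ = _ := by rw [E1]; ring
  -- split the full products at n / s
  have hns : n / s ≤ n := Nat.div_le_self n s
  have hQ : (∏ j ∈ Ioc 0 (n / s), (1 - (X : PowerSeries ℚ) ^ (s * t * j))) *
      ∏ j ∈ Ioc (n / s) n, (1 - (X : PowerSeries ℚ) ^ (s * t * j)) =
      ∏ j ∈ Ioc 0 n, (1 - (X : PowerSeries ℚ) ^ (s * t * j)) :=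
    Finset.prod_Ioc_consecutive _ (Nat.zero_le _) hns
  have hR : (∏ j ∈ Ioc 0 (n / s), (1 - (X : PowerSeries ℚ) ^ (s * j))) *
      ∏ j ∈ Ioc (n / s) n, (1 - (X : PowerSeries ℚ) ^ (s * j)) =
      ∏ j ∈ Ioc 0 n, (1 - (X : PowerSeries ℚ) ^ (s * j)) :=
    Finset.prod_Ioc_consecutive _ (Nat.zero_le _) hns
  have htail1 : (X : PowerSeries ℚ) ^ (n + 1) ∣
      (∏ j ∈ Ioc (n / s) n, (1 - (X : PowerSeries ℚ) ^ (s * t * j))) - 1 := by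
    apply dvd_prod_sub_one
    intro j hj
    rw [mem_Ioc] at hj
    have h1 : n < j * s := (Nat.div_lt_iff_lt_mul hs0).mp hj.1
    calc n < j * s := h1
      _ ≤ s * t * j := by nlinarith
  have htail2 : (X : PowerSeries ℚ) ^ (n + 1) ∣
      (∏ j ∈ Ioc (n / s) n, (1 - (X : PowerSeries ℚ) ^ (s * j))) - 1 := by
    apply dvd_prod_sub_one
    intro j hj
    rw [mem_Ioc] at hj
    have h1 : n < j * s := (Nat.div_lt_iff_lt_mul hs0).mp hj.1
    calc n < j * s := h1
      _ ≤ s * j := by nlinarith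
  have main : F s t n * ((∏ i ∈ Ioc 0 n, (1 - (X : PowerSeries ℚ) ^ i)) *
      ∏ j ∈ Ioc 0 n, (1 - (X : PowerSeries ℚ) ^ (s * t * j))) -
      (∏ j ∈ Ioc 0 n, (1 - (X : PowerSeries ℚ) ^ (t * j))) *
        ∏ j ∈ Ioc 0 n, (1 - (X : PowerSeries ℚ) ^ (s * j)) =
      ((∏ j ∈ Ioc 0 n, (1 - (X : PowerSeries ℚ) ^ (t * j))) *
        ∏ j ∈ Ioc 0 (n / s), (1 - (X : PowerSeries ℚ) ^ (s * j))) *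
        (((∏ j ∈ Ioc (n / s) n, (1 - (X : PowerSeries ℚ) ^ (s * t * j))) - 1) -
          ((∏ j ∈ Ioc (n / s) n, (1 - (X : PowerSeries ℚ) ^ (s * j))) - 1)) := by
    rw [← hQ, ← hR]
    calc F s t n * ((∏ i ∈ Ioc 0 n, (1 - (X : PowerSeries ℚ) ^ i)) *
        ((∏ j ∈ Ioc 0 (n / s), (1 - (X : PowerSeries ℚ) ^ (s * t * j))) *
          ∏ j ∈ Ioc (n / s) n, (1 - (X : PowerSeries ℚ) ^ (s * t * j)))) -
        (∏ j ∈ Ioc 0 n, (1 - (X : PowerSeries ℚ) ^ (t * j))) *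
        ((∏ j ∈ Ioc 0 (n / s), (1 - (X : PowerSeries ℚ) ^ (s * j))) *
          ∏ j ∈ Ioc (n / s) n, (1 - (X : PowerSeries ℚ) ^ (s * j)))
        = (F s t n * (∏ i ∈ Ioc 0 n, (1 - (X : PowerSeries ℚ) ^ i)) *
            ∏ j ∈ Ioc 0 (n / s), (1 - (X : PowerSeries ℚ) ^ (s * t * j))) *
            (∏ j ∈ Ioc (n / s) n, (1 - (X : PowerSeries ℚ) ^ (s * t * j))) -
          (∏ j ∈ Ioc 0 n, (1 - (X : PowerSeries ℚ) ^ (t * j))) *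
          ((∏ j ∈ Ioc 0 (n / s), (1 - (X : PowerSeries ℚ) ^ (s * j))) *
            ∏ j ∈ Ioc (n / s) n, (1 - (X : PowerSeries ℚ) ^ (s * j))) := by ring
      _ = _ := by rw [E2]; ring
  rw [main]
  exact Dvd.dvd.mul_left (dvd_sub htail1 htail2) _

theorem card_eq_coeff (s t n : ℕ) (hs : 2 ≤ s) (ht : 2 ≤ t) :
    (Nat.card {P : n.Partition // P.IsRegular s ∧ P.IsDistinct t} : ℚ) =
      coeff (R := ℚ) n (F s t n) := by
  have hmem : ∀ p : n.Partition, ∀ j ∈ p.parts, j ∈ Ioc 0 n := by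
    intro p j hj
    rw [mem_Ioc]
    refine ⟨p.parts_pos hj, ?_⟩
    simpa [p.parts_sum] using Multiset.single_le_sum (fun _ _ => Nat.zero_le _) _ hj
  have hprod : F s t n = ∏ i ∈ (Ioc 0 n).filter (fun i => ¬ s ∣ i),
      indicatorSeries ℚ ((· * i) '' {j | j < t}) := by
    refine Finset.prod_congr rfl fun i hi => ?_
    exact sum_pow_mul_eq_indicator i t (mem_Ioc.mp (mem_filter.mp hi).1).1
  rw [hprod, ← partialGF_prop ℚ n ((Ioc 0 n).filter (fun i => ¬ s ∣ i))
    (fun i hi => (mem_Ioc.mp (mem_filter.mp hi).1).1) (fun _ => {j | j < t})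
    (fun _ _ => by simpa using by omega)]
  norm_cast
  rw [Nat.card_eq_fintype_card, Fintype.card_subtype]
  congr 1
  apply Finset.filter_congr
  intro p _
  simp only [Set.mem_setOf_eq, mem_filter, mem_Ioc]
  constructor
  · rintro ⟨hreg, hdist⟩
    exact ⟨fun j => hdist j, fun j hj => ⟨mem_Ioc.mp (hmem p j hj), hreg j hj⟩⟩
  · rintro ⟨hdist, hreg⟩
    exact ⟨fun j hj => (hreg j hj).2, fun j => hdist j⟩

theorem coeff_F_symm (s t n : ℕ) (hs : 2 ≤ s) (ht : 2 ≤ t) :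
    coeff (R := ℚ) n (F s t n) = coeff (R := ℚ) n (F t s n) := by
  set W : PowerSeries ℚ := (∏ i ∈ Ioc 0 n, (1 - (X : PowerSeries ℚ) ^ i)) *
    ∏ j ∈ Ioc 0 n, (1 - (X : PowerSeries ℚ) ^ (s * t * j)) with hW
  have h1 := key_dvd s t n hs ht
  have h2 := key_dvd t s n ht hs
  rw [show t * s = s * t by ring] at h2
  have hdiff : (X : PowerSeries ℚ) ^ (n + 1) ∣ (F s t n - F t s n) * W := by
    have : (F s t n - F t s n) * W =
        (F s t n * W - (∏ j ∈ Ioc 0 n, (1 - (X : PowerSeries ℚ) ^ (t * j))) *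
          ∏ j ∈ Ioc 0 n, (1 - (X : PowerSeries ℚ) ^ (s * j))) -
        (F t s n * W - (∏ j ∈ Ioc 0 n, (1 - (X : PowerSeries ℚ) ^ (s * j))) *
          ∏ j ∈ Ioc 0 n, (1 - (X : PowerSeries ℚ) ^ (t * j))) := by ring
    rw [this]
    exact dvd_sub h1 h2
  have hunit : IsUnit W := by
    rw [PowerSeries.isUnit_iff_constantCoeff]
    have hc : constantCoeff (R := ℚ) W = 1 := by
      rw [hW, map_mul, map_prod, map_prod]
      have h1 : ∀ i ∈ Ioc 0 n, constantCoeff (R := ℚ) (1 - (X : PowerSeries ℚ) ^ i) = 1 := by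
        intro i hi
        rw [map_sub, map_pow, constantCoeff_one, constantCoeff_X,
          zero_pow (by have := (mem_Ioc.mp hi).1; omega), sub_zero]
      have h2 : ∀ i ∈ Ioc 0 n, constantCoeff (R := ℚ) (1 - (X : PowerSeries ℚ) ^ (s * t * i)) = 1 := by
        intro i hi
        rw [map_sub, map_pow, constantCoeff_one, constantCoeff_X,
          zero_pow (by have := (mem_Ioc.mp hi).1; positivity), sub_zero]
      rw [Finset.prod_congr rfl h1, Finset.prod_congr rfl h2]
      simp
    rw [hc]
    exact isUnit_one
  have hdvd : (X : PowerSeries ℚ) ^ (n + 1) ∣ F s t n - F t s n :=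
    (hunit.dvd_mul_right).mp hdiff
  have := (PowerSeries.X_pow_dvd_iff.mp hdvd) n (Nat.lt_succ_self n)
  rw [map_sub, sub_eq_zero] at this
  exact this

end

end RegDistAux

/-- The number of partitions of `n` that are `s`-regular and `t`-distinct equals
the number of partitions of `n` that are `t`-regular and `s`-distinct. -/
theorem regular_distinct_symm (s t : ℕ) (hs : 2 ≤ s) (ht : 2 ≤ t) (n : ℕ) :
    Nat.card {P : n.Partition // P.IsRegular s ∧ P.IsDistinct t} =
      Nat.card {P : n.Partition // P.IsRegular t ∧ P.IsDistinct s} := by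
  have h1 := RegDistAux.card_eq_coeff s t n hs ht
  have h2 := RegDistAux.card_eq_coeff t s n ht hs
  have h3 := RegDistAux.coeff_F_symm s t n hs ht
  exact_mod_cast h1.trans (h3.trans h2.symm)
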